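/- The special L²-admissible pair associated to an exotic pair (Lemma 4.10 of the paper): Let d ≥ 2 be an integer, σ ∈ [d/(2d−1), 1), α ∈ (4σ/d, 4σ/(d+1−2σ)), and let 𝔞, 𝔯 ∈ (2, ∞) satisfy 2σ/𝔞 + d/𝔯 = 2σ/α and 𝔯 > α(α+1)d/((α+2)σ). Define ã := 4σ𝔯/(αd) and r̃ := 2𝔯/(𝔯 − α) (note 𝔯 > α so r̃ is well defined). Then: ã, r̃ ∈ (2, ∞); the pair is L²-admissible, i.e. 2σ/ã + d/r̃ = d/2; ã > max{2, ã′}; 1/ã′ = α/𝔞 + 1/ã; 1/r̃′ = α/𝔯 + 1/r̃; 1/ã ≤ ((2d−1)/2)·(1/2 − 1/r̃); and (ã, r̃) ≠ (2, (4d−2)/(2d−3)). In fact, for these ã, r̃ the inequality 1/ã ≤ ((2d−1)/2)·(1/2 − 1/r̃) holds if and only if σ ≥ d/(2d−1). -/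

import Mathlib

/-- The Hölder conjugate exponent of `r`, defined by `1/r + 1/r' = 1`, i.e. `r' = r/(r-1)`. -/
noncomputable def conjExp (r : ℝ) : ℝ := r / (r - 1)

/-- The special `L²`-admissible pair associated to an exotic pair (Lemma 4.10). -/
theorem special_L2_admissible_pair (d : ℕ) (hd : 2 ≤ d) (σ α : ℝ)
    (hσ1 : (d : ℝ) / (2 * (d : ℝ) - 1) ≤ σ) (hσ2 : σ < 1)
    (hα1 : 4 * σ / (d : ℝ) < α) (hα2 : α < 4 * σ / ((d : ℝ) + 1 - 2 * σ))
    (a r : ℝ) (ha : 2 < a) (hr : 2 < r)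
    (hadm : 2 * σ / a + (d : ℝ) / r = 2 * σ / α)
    (hrL : α * (α + 1) * (d : ℝ) / ((α + 2) * σ) < r)
    (at' rt : ℝ) (hat : at' = 4 * σ * r / (α * (d : ℝ))) (hrt : rt = 2 * r / (r - α)) :
    2 < at' ∧ 2 < rt ∧
    2 * σ / at' + (d : ℝ) / rt = (d : ℝ) / 2 ∧
    max 2 (conjExp at') < at' ∧
    1 / conjExp at' = α / a + 1 / at' ∧
    1 / conjExp rt = α / r + 1 / rt ∧
    1 / at' ≤ ((2 * (d : ℝ) - 1) / 2) * (1 / 2 - 1 / rt) ∧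
    (at', rt) ≠ ((2 : ℝ), (4 * (d : ℝ) - 2) / (2 * (d : ℝ) - 3)) ∧
    (1 / at' ≤ ((2 * (d : ℝ) - 1) / 2) * (1 / 2 - 1 / rt) ↔
      (d : ℝ) / (2 * (d : ℝ) - 1) ≤ σ) := by
  have hdR : (2:ℝ) ≤ (d:ℝ) := by exact_mod_cast hd
  have hdpos : (0:ℝ) < (d:ℝ) := by linarith
  have hσ : 0 < σ := lt_of_lt_of_le (div_pos hdpos (by linarith)) hσ1
  have hα : 0 < α := lt_trans (by positivity) hα1
  have ha0 : (0:ℝ) < a := by linarith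
  have hr0 : (0:ℝ) < r := by linarith
  have hdr : (d:ℝ) / r < 2 * σ / α := by
    have h2 : 0 < 2 * σ / a := by positivity
    linarith
  have hcross : (d:ℝ) * α < 2 * σ * r := (div_lt_div_iff₀ hr0 hα).mp hdr
  have hrα : α < r := by
    nlinarith [mul_nonneg hα.le (show (0:ℝ) ≤ (d:ℝ) - 2 * σ by linarith)]
  have hat2 : 2 < at' := by
    rw [hat, lt_div_iff₀ (by positivity)]
    nlinarith [hcross]
  have hrt2 : 2 < rt := by
    rw [hrt, lt_div_iff₀ (by linarith : (0:ℝ) < r - α)]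
    linarith
  have hatne : at' ≠ 0 := by linarith
  have hrtne : rt ≠ 0 := by linarith
  have hadm' : 2 * σ / at' + (d:ℝ) / rt = (d:ℝ) / 2 := by
    rw [hat, hrt]
    field_simp
    ring
  have hmax : max 2 (conjExp at') < at' := by
    apply max_lt hat2
    rw [conjExp, div_lt_iff₀ (by linarith)]
    nlinarith
  have e1 : 1 / at' = α * (d:ℝ) / (4 * σ * r) := by
    rw [hat, one_div_div]
  have hrαne : r - α ≠ 0 := by linarith
  have e2 : (1:ℝ) / 2 - 1 / rt = α / (2 * r) := by
    rw [hrt, one_div_div]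
    field_simp
    ring
  have key : (1 / at' ≤ ((2 * (d:ℝ) - 1) / 2) * (1 / 2 - 1 / rt) ↔
      (d:ℝ) / (2 * (d:ℝ) - 1) ≤ σ) := by
    rw [e1, e2,
      show ((2 * (d:ℝ) - 1) / 2) * (α / (2 * r)) = ((2 * (d:ℝ) - 1) * α) / (4 * r) by ring,
      div_le_div_iff₀ (by positivity) (by positivity),
      show α * (d:ℝ) * (4 * r) = (d:ℝ) * (4 * (α * r)) by ring,
      show (2 * (d:ℝ) - 1) * α * (4 * σ * r) = ((2 * (d:ℝ) - 1) * σ) * (4 * (α * r)) by ring,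
      mul_le_mul_iff_left₀ (by positivity : (0:ℝ) < 4 * (α * r)),
      div_le_iff₀ (by linarith : (0:ℝ) < 2 * (d:ℝ) - 1)]
    constructor <;> intro h <;> linarith
  refine ⟨hat2, hrt2, hadm', hmax, ?_, ?_, key.mpr hσ1, ?_, key⟩
  · have hαa : α / a = 1 - α * (d:ℝ) / (2 * σ * r) := by
      field_simp at hadm ⊢
      linear_combination hadm
    have h1 : at' - 1 ≠ 0 := by linarith
    rw [conjExp, one_div_div,
      show (at' - 1) / at' = 1 - 1 / at' by field_simp, hαa, e1]
    ring
  · rw [conjExp, one_div_div,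
      show (rt - 1) / rt = 1 - 1 / rt by field_simp, hrt, one_div_div]
    field_simp
    ring
  · intro hcon
    have := (Prod.mk.injEq _ _ _ _).mp hcon
    linarith [this.1]
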